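/- Let $k \ge 1$, let $M_k \in \mathbb{R}^{k\times k}$ be the tridiagonal matrix with diagonal $2$ and off-diagonal $-1$, and $\gamma > 0$. Then $\min_{w \in \mathbb{R}^k} \big[ \langle w, M_k w\rangle - 2\gamma \langle w, e_1\rangle \big] = -\gamma^2 \frac{k}{k+1}$, attained at $w^* = \gamma M_k^{-1} e_1$ with coordinates $w^*_i = \gamma\frac{k+1-i}{k+1}$. -/

import Mathlib

open Matrix

lemma sum_delta {n : ℕ} (m : ℕ) (f : Fin n → ℝ) :
    ∑ j : Fin n, (if (j:ℕ) = m then f j else 0) = if h : m < n then f ⟨m, h⟩ else 0 := by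
  split_ifs with h
  · rw [Finset.sum_eq_single (⟨m, h⟩ : Fin n)]
    · simp
    · intro b _ hb; rw [if_neg]; simpa [Fin.ext_iff] using hb
    · simp
  · apply Finset.sum_eq_zero; intro j _; rw [if_neg]; omega

lemma sum_delta' {n : ℕ} (m : ℕ) (f : Fin n → ℝ) :
    ∑ j : Fin n, (if (j:ℕ) + 1 = m then f j else 0)
      = if h : 1 ≤ m ∧ m - 1 < n then f ⟨m - 1, h.2⟩ else 0 := by
  split_ifs with h
  · rw [Finset.sum_eq_single (⟨m - 1, h.2⟩ : Fin n)]
    · have hc : ((⟨m - 1, h.2⟩ : Fin n) : ℕ) + 1 = m := Nat.succ_pred_eq_of_pos h.1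
      rw [if_pos hc]
    · intro b _ hb
      rw [if_neg]
      intro hc
      exact hb (Fin.ext (by simp only [Fin.val_mk]; omega))
    · simp
  · apply Finset.sum_eq_zero; intro j _; rw [if_neg]; omega

lemma mulVec_tridiag {k : ℕ} (M : Matrix (Fin k) (Fin k) ℝ)
    (hM : ∀ i j : Fin k,
      M i j = if i = j then 2
        else if (i : ℕ) = (j : ℕ) + 1 ∨ (j : ℕ) = (i : ℕ) + 1 then -1 else 0)
    (v : Fin k → ℝ) (i : Fin k) :
    (M.mulVec v) i = 2 * v i
      - (if h : (i:ℕ) + 1 < k then v ⟨(i:ℕ) + 1, h⟩ else 0)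
      - (if h : 1 ≤ (i:ℕ) then v ⟨(i:ℕ) - 1, lt_of_le_of_lt (Nat.sub_le _ _) i.2⟩ else 0) := by
  have key : ∀ j : Fin k, M i j * v j =
      (if (j:ℕ) = (i:ℕ) then 2 * v j else 0)
      - (if (j:ℕ) = (i:ℕ) + 1 then v j else 0)
      - (if (j:ℕ) + 1 = (i:ℕ) then v j else 0) := by
    intro j
    rw [hM]
    simp only [Fin.ext_iff]
    split_ifs <;> first | omega | ring
  simp only [Matrix.mulVec, dotProduct, key, Finset.sum_sub_distrib, sum_delta, sum_delta']
  rw [dif_pos i.2]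
  simp only [Fin.eta]
  split_ifs <;> first | rfl | omega

lemma tridiag_psd {k : ℕ} (M : Matrix (Fin k) (Fin k) ℝ)
    (hM : ∀ i j : Fin k,
      M i j = if i = j then 2
        else if (i : ℕ) = (j : ℕ) + 1 ∨ (j : ℕ) = (i : ℕ) + 1 then -1 else 0) :
    ∀ v : Fin k → ℝ, 0 ≤ dotProduct v (M.mulVec v) := by
  set B : Matrix (Fin (k+1)) (Fin k) ℝ := fun l i =>
    (if l = i.castSucc then 1 else 0) - (if l = i.succ then 1 else 0) with hB
  have hfact : M = Bᵀ * B := by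
    ext i j
    rw [Matrix.mul_apply, hM]
    simp only [transpose_apply]
    simp only [transpose_apply, hB, sub_mul, mul_sub, ite_mul, mul_ite, one_mul, zero_mul,
      mul_one, mul_zero, Finset.sum_sub_distrib, Finset.sum_ite_eq', Finset.mem_univ, if_true]
    simp only [Fin.ext_iff, Fin.val_succ, Fin.coe_castSucc]
    split_ifs <;> first | omega | norm_num
  intro v
  have h : dotProduct v (M.mulVec v) = dotProduct (B.mulVec v) (B.mulVec v) := by
    rw [hfact, ← Matrix.mulVec_mulVec, Matrix.dotProduct_mulVec, Matrix.vecMul_transpose]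
  rw [h]
  exact Finset.sum_nonneg fun i _ => mul_self_nonneg _

theorem stmt_12 (k : ℕ) (hk : 1 ≤ k) (γ : ℝ) (hγ : 0 < γ)
    (M : Matrix (Fin k) (Fin k) ℝ)
    (hM : ∀ i j : Fin k,
      M i j = if i = j then 2
        else if (i : ℕ) = (j : ℕ) + 1 ∨ (j : ℕ) = (i : ℕ) + 1 then -1 else 0)
    (wstar : Fin k → ℝ)
    (hws : ∀ i : Fin k, wstar i = γ * (k - (i : ℕ)) / (k + 1)) :
    (∀ w : Fin k → ℝ,
      -γ ^ 2 * k / (k + 1) ≤ dotProduct w (M.mulVec w) - 2 * γ * w ⟨0, hk⟩) ∧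
    (dotProduct wstar (M.mulVec wstar) - 2 * γ * wstar ⟨0, hk⟩
      = -γ ^ 2 * k / (k + 1)) ∧
    (M.mulVec wstar = γ • (Pi.single ⟨0, hk⟩ 1 : Fin k → ℝ)) := by
  have hK : (k:ℝ) + 1 ≠ 0 := by positivity
  -- the linear system
  have hMw : M.mulVec wstar = γ • (Pi.single ⟨0, hk⟩ 1 : Fin k → ℝ) := by
    funext i
    rw [mulVec_tridiag M hM]
    simp only [Pi.smul_apply, Pi.single_apply, smul_eq_mul]
    rcases Nat.eq_zero_or_pos (i:ℕ) with h0 | h0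
    · have hi : i = ⟨0, hk⟩ := Fin.ext h0
      rw [if_pos hi, dif_neg (show ¬ 1 ≤ (i:ℕ) by omega)]
      have hi0 : ((i:ℕ):ℝ) = 0 := by exact_mod_cast h0
      by_cases h1 : (i:ℕ) + 1 < k
      · rw [dif_pos h1, hws, hws]
        have hv : (((⟨(i:ℕ) + 1, h1⟩ : Fin k) : ℕ) : ℝ) = ((i:ℕ):ℝ) + 1 := by push_cast; rfl
        rw [hv, hi0]
        field_simp
        ring
      · have hk1 : (k:ℝ) = 1 := by
          have : k = 1 := by omega
          exact_mod_cast this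
        rw [dif_neg h1, hws, hi0, hk1]
        norm_num
        ring
    · have hi : ¬ i = ⟨0, hk⟩ := by
        intro e
        rw [e] at h0
        simp at h0
      have h0' : 1 ≤ (i:ℕ) := h0
      rw [if_neg hi, mul_zero, dif_pos h0', hws, hws]
      have hv : (((⟨(i:ℕ) - 1, lt_of_le_of_lt (Nat.sub_le _ _) i.2⟩ : Fin k) : ℕ) : ℝ)
          = ((i:ℕ):ℝ) - 1 := by
        simp only [Fin.val_mk]
        push_cast [Nat.cast_sub h0']
        ring
      rw [hv]
      by_cases h1 : (i:ℕ) + 1 < k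
      · rw [dif_pos h1, hws]
        have hv2 : (((⟨(i:ℕ) + 1, h1⟩ : Fin k) : ℕ) : ℝ) = ((i:ℕ):ℝ) + 1 := by push_cast; rfl
        rw [hv2]
        field_simp
        ring
      · have hik : ((i:ℕ):ℝ) = (k:ℝ) - 1 := by
          have : (i:ℕ) + 1 = k := by omega
          have := congrArg (Nat.cast : ℕ → ℝ) this
          push_cast at this
          linarith
        rw [dif_neg h1, hik]
        field_simp
        ring
  -- value at wstar
  have hw0 : γ * wstar ⟨0, hk⟩ = γ ^ 2 * k / (k + 1) := by
    rw [hws]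
    simp only [Fin.val_mk, Nat.cast_zero, sub_zero]
    field_simp
  have hval : dotProduct wstar (M.mulVec wstar) - 2 * γ * wstar ⟨0, hk⟩
      = -γ ^ 2 * k / (k + 1) := by
    rw [hMw, dotProduct_smul, dotProduct_single, smul_eq_mul, mul_one]
    have : γ * wstar ⟨0, hk⟩ = γ ^ 2 * k / (k + 1) := hw0
    have h2 : 2 * γ * wstar ⟨0, hk⟩ = 2 * (γ * wstar ⟨0, hk⟩) := by ring
    rw [h2, this]
    ring
  refine ⟨?_, hval, hMw⟩
  intro w
  have hpsd := tridiag_psd M hM (w - wstar)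
  have hswap : dotProduct wstar (M.mulVec w) = dotProduct w (M.mulVec wstar) := by
    have hMT : Mᵀ = M := by
      ext i j
      rw [transpose_apply, hM, hM]
      simp only [Fin.ext_iff]
      split_ifs <;> first | rfl | omega
    rw [Matrix.dotProduct_mulVec]
    nth_rewrite 1 [← hMT]
    rw [Matrix.vecMul_transpose]
    exact dotProduct_comm _ _
  have hdot : dotProduct w (M.mulVec wstar) = γ * w ⟨0, hk⟩ := by
    rw [hMw, dotProduct_smul, dotProduct_single, smul_eq_mul, mul_one]
  have hexp : dotProduct (w - wstar) (M.mulVec (w - wstar))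
      = dotProduct w (M.mulVec w) - 2 * γ * w ⟨0, hk⟩ + γ ^ 2 * k / (k + 1) := by
    rw [Matrix.mulVec_sub, dotProduct_sub, sub_dotProduct, sub_dotProduct,
      hswap, hdot]
    rw [show dotProduct wstar (M.mulVec wstar) = γ * wstar ⟨0, hk⟩ by
      rw [hMw, dotProduct_smul, dotProduct_single, smul_eq_mul, mul_one]]
    rw [hw0]
    ring
  rw [hexp] at hpsd
  rw [show -γ ^ 2 * (k:ℝ) / (k + 1) = -(γ ^ 2 * k / (k + 1)) by ring]
  linarith
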